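/- Let p be a prime and X = (V, E, s, t) a finite connected directed multigraph with V nonempty. Suppose some closed walk of X has nonzero weight, let d be the positive generator of the subgroup of ℤ generated by the weights of all closed walks of X, and let n₀ = v_p(d) be the p-adic valuation of d. Then for every n ≥ 0, the number of connected components of the derived graph X(ℤ/p^nℤ, α), where α is the constant voltage assignment with value 1, equals p^{min(n, n₀)}. In particular, the number of connected components equals p^{n₀} for all n ≥ n₀, and equals p^m for all 0 ≤ m ≤ n₀. -/

import Mathlib

/-- A directed multigraph: a vertex type `V`, an edge type `E`, and source/target maps. -/
structure DirMultigraph (V E : Type*) where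
  s : E → V
  t : E → V

/-- The adjacency relation: there is an edge with source `x` and target `y`. -/
def DirMultigraph.Adj {V E : Type*} (X : DirMultigraph V E) (x y : V) : Prop :=
  ∃ e, X.s e = x ∧ X.t e = y

/-- A directed multigraph is connected if any two vertices are related by the
reflexive-transitive-symmetric closure of the adjacency relation. -/
def DirMultigraph.Connected {V E : Type*} (X : DirMultigraph V E) : Prop :=
  ∀ x y : V, Relation.EqvGen X.Adj x y

/-- The set of connected components: the quotient of the vertex set by the
reflexive-transitive-symmetric closure of the adjacency relation. -/
def DirMultigraph.Components {V E : Type*} (X : DirMultigraph V E) : Type _ :=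
  Quot X.Adj

/-- The derived graph `X(G, α)` of a voltage assignment `α : E → G`: vertices `V × G`,
edges `E × G`, where the edge `(e, σ)` goes from `(s e, σ)` to `(t e, σ + α e)`. -/
def DirMultigraph.derived {V E G : Type*} [AddCommGroup G]
    (X : DirMultigraph V E) (α : E → G) : DirMultigraph (V × G) (E × G) where
  s := fun q => (X.s q.1, q.2)
  t := fun q => (X.t q.1, q.2 + α q.1)

/-- `WalkW X u v k` holds if there is a walk from `u` to `v` in which edges may be traversed
forwards or backwards, of weight `k` = (number of forwards steps) − (number of backwards
steps). -/
inductive DirMultigraph.WalkW {V E : Type*} (X : DirMultigraph V E) : V → V → ℤ → Prop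
  | nil (v : V) : WalkW X v v 0
  | fwd {u v w : V} {k : ℤ} (e : E) (h : WalkW X u v k) (hs : X.s e = v) (ht : X.t e = w) :
      WalkW X u w (k + 1)
  | bwd {u v w : V} {k : ℤ} (e : E) (h : WalkW X u v k) (ht : X.t e = v) (hs : X.s e = w) :
      WalkW X u w (k - 1)

namespace DirMultigraph

variable {V E : Type*} {X : DirMultigraph V E}

lemma WalkW.trans' {u v w : V} {k l : ℤ} (h1 : X.WalkW u v k) (h2 : X.WalkW v w l) :
    X.WalkW u w (k + l) := by
  induction h2 with
  | nil => simpa using h1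
  | fwd e h hs ht ih => rw [← add_assoc]; exact ih.fwd e hs ht
  | bwd e h ht hs ih => rw [← add_sub_assoc]; exact ih.bwd e ht hs

lemma WalkW.symm' {u v : V} {k : ℤ} (h : X.WalkW u v k) : X.WalkW v u (-k) := by
  induction h with
  | nil => simpa using WalkW.nil _
  | fwd e h hs ht ih =>
      have := (WalkW.bwd e (WalkW.nil _) ht hs).trans' ih
      rwa [show (0 : ℤ) - 1 + -_ = -(_ + 1) from by ring] at this
  | bwd e h ht hs ih =>
      have := (WalkW.fwd e (WalkW.nil _) hs ht).trans' ih
      rwa [show (0 : ℤ) + 1 + -_ = -(_ - 1) from by ring] at this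

lemma adj_walkW {x y : V} (h : X.Adj x y) : X.WalkW x y 1 := by
  obtain ⟨e, hs, ht⟩ := h
  have := (WalkW.nil x).fwd e hs ht
  simpa using this

lemma exists_walkW (hX : X.Connected) (x y : V) : ∃ k, X.WalkW x y k := by
  induction hX x y with
  | rel a b h => exact ⟨1, adj_walkW h⟩
  | refl a => exact ⟨0, WalkW.nil a⟩
  | symm a b h ih => obtain ⟨k, hk⟩ := ih; exact ⟨-k, hk.symm'⟩
  | trans a b c h1 h2 ih1 ih2 =>
      obtain ⟨k, hk⟩ := ih1; obtain ⟨l, hl⟩ := ih2; exact ⟨k + l, hk.trans' hl⟩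

lemma walkW_eqvGen {G : Type*} [AddCommGroupWithOne G] {u w : V} {kk : ℤ}
    (h : X.WalkW u w kk) (σ : G) :
    Relation.EqvGen (X.derived (fun _ : E => (1 : G))).Adj (u, σ) (w, σ + (kk : G)) := by
  induction h with
  | nil => simpa using Relation.EqvGen.refl (α := V × G) (u, σ)
  | @fwd v' w' k' e h hs ht ih =>
      refine Relation.EqvGen.trans _ _ _ ih
        (Relation.EqvGen.rel _ _ ⟨(e, σ + (k' : G)), ?_, ?_⟩)
      · simp [derived, hs]
      · show (X.t e, σ + (k' : G) + 1) = (w', σ + ((k' + 1 : ℤ) : G))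
        rw [ht]; congr 1; push_cast; abel
  | @bwd v' w' k' e h ht hs ih =>
      refine Relation.EqvGen.trans _ _ _ ih (Relation.EqvGen.symm _ _
        (Relation.EqvGen.rel _ _ ⟨(e, σ + ((k' - 1 : ℤ) : G)), ?_, ?_⟩))
      · simp [derived, hs]
      · show (X.t e, σ + ((k' - 1 : ℤ) : G) + 1) = (v', σ + (k' : G))
        rw [ht]; congr 1; push_cast; abel

lemma derived_eqvGen_iff {G : Type*} [AddCommGroupWithOne G] (a b : V × G) :
    Relation.EqvGen (X.derived (fun _ : E => (1 : G))).Adj a b ↔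
      ∃ k : ℤ, X.WalkW a.1 b.1 k ∧ b.2 = a.2 + (k : G) := by
  constructor
  · intro h
    induction h with
    | rel x y h =>
        obtain ⟨q, rfl, rfl⟩ := h
        refine ⟨1, ?_, by simp [derived]⟩
        have := (WalkW.nil (X.s q.1)).fwd q.1 rfl rfl
        simpa [derived] using this
    | refl x => exact ⟨0, WalkW.nil _, by simp⟩
    | symm x y h ih =>
        obtain ⟨k, hw, he⟩ := ih
        exact ⟨-k, hw.symm', by rw [he]; push_cast; abel⟩
    | trans x y z h1 h2 ih1 ih2 =>
        obtain ⟨k, hw, he⟩ := ih1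
        obtain ⟨l, hw', he'⟩ := ih2
        exact ⟨k + l, hw.trans' hw', by rw [he', he]; push_cast; abel⟩
  · rintro ⟨k, hw, he⟩
    obtain ⟨u, σ⟩ := a
    obtain ⟨w, τ⟩ := b
    simp only at hw he
    subst he
    exact walkW_eqvGen hw σ

end DirMultigraph

lemma gcd_pow_prime_eq {p : ℕ} (hp : p.Prime) {d : ℕ} (hd : 0 < d) (n : ℕ) :
    Nat.gcd d (p ^ n) = p ^ min n (padicValNat p d) := by
  obtain ⟨j, hjn, hgj⟩ := (Nat.dvd_prime_pow hp).mp (Nat.gcd_dvd_right d (p ^ n))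
  rw [hgj]
  congr 1
  have hfac := Nat.factorization_gcd hd.ne' (pow_pos hp.pos n).ne'
  have h1 : (Nat.gcd d (p ^ n)).factorization p = j := by
    rw [hgj, hp.factorization_pow]; simp
  have h2 : (Nat.gcd d (p ^ n)).factorization p
      = min (d.factorization p) ((p ^ n).factorization p) := by
    rw [hfac]; rfl
  rw [h1, hp.factorization_pow, Nat.factorization_def d hp] at h2
  simp only [Finsupp.single_eq_same] at h2
  omega

/-- Let `X` be a finite connected directed multigraph admitting a closed walk of nonzero
weight, let `d > 0` be the positive generator of the subgroup of `ℤ` generated by the weights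
of all closed walks of `X`, and let `n₀ = v_p(d)`. Then for every `n ≥ 0`, the number of
connected components of the derived graph `X(ℤ/pⁿℤ, α)` of the constant voltage assignment
with value `1` equals `p^min(n, n₀)`; in particular it equals `p^n₀` for `n ≥ n₀` and `p^m`
for `0 ≤ m ≤ n₀`. -/
theorem card_components_derived_eq_pow_min {p : ℕ} [Fact p.Prime] {V E : Type*}
    [Fintype V] [Fintype E] [Nonempty V] (X : DirMultigraph V E) (hX : X.Connected)
    (hex : ∃ (v : V) (k : ℤ), X.WalkW v v k ∧ k ≠ 0)
    (d : ℕ) (hd : 0 < d)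
    (hgen : AddSubgroup.closure {k : ℤ | ∃ v : V, X.WalkW v v k}
      = AddSubgroup.zmultiples (d : ℤ)) :
    ∀ n : ℕ,
      Nat.card (X.derived (fun _ : E => (1 : ZMod (p ^ n)))).Components
        = p ^ (min n (padicValNat p d)) := by
  intro n
  obtain ⟨v₀⟩ := ‹Nonempty V›
  have hp : p.Prime := Fact.out
  choose k hk using fun u => DirMultigraph.exists_walkW hX v₀ u
  -- every multiple of d is the weight of a closed walk at v₀
  have hdvd_loop : ∀ m : ℤ, (∃ v, X.WalkW v v m) → (d : ℤ) ∣ m := by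
    intro m hm
    have : m ∈ AddSubgroup.closure {k : ℤ | ∃ v : V, X.WalkW v v k} :=
      AddSubgroup.subset_closure hm
    rw [hgen, AddSubgroup.mem_zmultiples_iff] at this
    obtain ⟨c, hc⟩ := this
    exact ⟨c, by rw [← hc]; simp [zsmul_eq_mul, mul_comm]⟩
  have hloop : ∀ z : ℤ, X.WalkW v₀ v₀ ((d : ℤ) * z) := by
    intro z
    -- closed walks at v₀ form a subgroup containing the generating set
    have hsub : ∀ m ∈ AddSubgroup.closure {k : ℤ | ∃ v : V, X.WalkW v v k}, X.WalkW v₀ v₀ m := by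
      let A : AddSubgroup ℤ :=
        { carrier := {m : ℤ | X.WalkW v₀ v₀ m}
          zero_mem' := DirMultigraph.WalkW.nil v₀
          add_mem' := fun h1 h2 => h1.trans' h2
          neg_mem' := fun h => h.symm' }
      intro m hm
      refine (AddSubgroup.closure_le A).mpr ?_ hm
      rintro m ⟨v, hv⟩
      have : X.WalkW v₀ v₀ (k v + m + -(k v)) := ((hk v).trans' hv).trans' (hk v).symm'
      rwa [show k v + m + -(k v) = m from by ring] at this
    apply hsub
    rw [hgen, AddSubgroup.mem_zmultiples_iff]
    exact ⟨z, by simp [zsmul_eq_mul, mul_comm]⟩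
  set g := Nat.gcd d (p ^ n) with hg
  have hgdvd : g ∣ p ^ n := Nat.gcd_dvd_right _ _
  have hgd : (g : ℤ) ∣ (d : ℤ) := Int.natCast_dvd_natCast.mpr (Nat.gcd_dvd_left _ _)
  haveI : NeZero g := ⟨Nat.gcd_ne_zero_left hd.ne'⟩
  let φ : ZMod (p ^ n) →+* ZMod g := ZMod.castHom hgdvd _
  let F : V × ZMod (p ^ n) → ZMod g := fun a => φ a.2 - ((k a.1 : ℤ) : ZMod g)
  have hsound : ∀ a b, (X.derived fun _ : E => (1 : ZMod (p ^ n))).Adj a b → F a = F b := by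
    rintro a b ⟨⟨e, σ⟩, rfl, rfl⟩
    have hclosed : X.WalkW v₀ v₀ (k (X.s e) + (0 + 1) + -(k (X.t e))) := by
      have hstep := (DirMultigraph.WalkW.nil (X.s e)).fwd e rfl rfl
      exact ((hk (X.s e)).trans' hstep).trans' (hk (X.t e)).symm'
    have hdl : (g : ℤ) ∣ (k (X.t e) - k (X.s e) - 1) := by
      have h1 := hgd.trans (hdvd_loop _ ⟨v₀, hclosed⟩)
      have := dvd_neg.mpr h1
      rwa [show -(k (X.s e) + (0 + 1) + -(k (X.t e))) = k (X.t e) - k (X.s e) - 1 from by ring]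
        at this
    have hz : ((k (X.t e) - k (X.s e) - 1 : ℤ) : ZMod g) = 0 :=
      (ZMod.intCast_zmod_eq_zero_iff_dvd _ _).mpr hdl
    push_cast at hz
    show φ σ - ((k (X.s e) : ℤ) : ZMod g) = φ (σ + 1) - ((k (X.t e) : ℤ) : ZMod g)
    rw [map_add, map_one]
    linear_combination hz
  let Φ : (X.derived fun _ : E => (1 : ZMod (p ^ n))).Components → ZMod g := Quot.lift F hsound
  have hbij : Function.Bijective Φ := by
    constructor
    · intro x y h
      induction x using Quot.ind with | _ a =>
      induction y using Quot.ind with | _ b =>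
      obtain ⟨u, σ⟩ := a
      obtain ⟨w, τ⟩ := b
      obtain ⟨aZ, rfl⟩ := ZMod.intCast_surjective σ
      obtain ⟨bZ, rfl⟩ := ZMod.intCast_surjective τ
      have h' : ((aZ - k u : ℤ) : ZMod g) = ((bZ - k w : ℤ) : ZMod g) := by
        have : φ ((aZ : ZMod (p ^ n))) - ((k u : ℤ) : ZMod g)
            = φ ((bZ : ZMod (p ^ n))) - ((k w : ℤ) : ZMod g) := h
        rw [map_intCast, map_intCast] at this
        push_cast
        linear_combination this
      rw [ZMod.intCast_eq_intCast_iff] at h'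
      obtain ⟨c, hc⟩ := h'.dvd
      set A := Nat.gcdA d (p ^ n) with hA
      set B := Nat.gcdB d (p ^ n) with hB
      have hbez : (g : ℤ) = d * A + (p ^ n) * B := by
        rw [hg, Nat.gcd_eq_gcd_ab]; push_cast; ring
      set kk : ℤ := (-(k u) + (d : ℤ) * (c * A)) + k w with hkk
      have hwalk : X.WalkW u w kk := ((hk u).symm'.trans' (hloop (c * A))).trans' (hk w)
      have hmod : ((bZ : ZMod (p ^ n))) = ((aZ : ZMod (p ^ n))) + ((kk : ℤ) : ZMod (p ^ n)) := by
        have : ((aZ + kk : ℤ) : ZMod (p ^ n)) = ((bZ : ℤ) : ZMod (p ^ n)) := by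
          rw [ZMod.intCast_eq_intCast_iff, Int.modEq_iff_dvd]
          refine ⟨c * B, ?_⟩
          push_cast
          linear_combination hc + c * hbez
        push_cast at this ⊢
        linear_combination -this
      exact Quot.eq.mpr ((DirMultigraph.derived_eqvGen_iff _ _).mpr ⟨kk, hwalk, hmod⟩)
    · intro y
      obtain ⟨m, rfl⟩ := ZMod.intCast_surjective y
      refine ⟨Quot.mk _ (v₀, ((m + k v₀ : ℤ) : ZMod (p ^ n))), ?_⟩
      show φ _ - _ = _
      rw [map_intCast]
      push_cast
      ring
  have hcard := Nat.card_eq_of_bijective Φ hbij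
  rw [hcard, Nat.card_zmod, hg, gcd_pow_prime_eq hp hd n]
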